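/- In the autonomy-aware clustering setup with squared Euclidean cost and autonomy independent of Y, the free energy F is differentiable in Y, and its partial gradient with respect to the representative y_ℓ is ∂F/∂y_ℓ = 2 Σ_{i=1}^N Σ_{j=1}^K ρ(i) π_Y^β(j|i) p(ℓ|j,i) (y_ℓ − x_i) for every ℓ = 1, …, K. -/

import Mathlib

theorem stmt_1_sum_aux {N K : ℕ} {β : ℝ} (hβ : β ≠ 0) (ρ s : Fin N → ℝ)
    (e : Fin N → Fin K → ℝ) (p : Fin K → Fin K → Fin N → ℝ) (t : Fin K → Fin N → ℝ) :
    ∑ k : Fin K, ∑ i : Fin N, ∑ j : Fin K, 2 * (ρ i * (e i j * (s i)⁻¹) * p k j i * t k i)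
      = ∑ i : Fin N, ∑ j : Fin K, ∑ k : Fin K,
        -(1 * β⁻¹) * (ρ i * ((s i)⁻¹ * (e i j * -β * (p k j i * (2 * t k i))))) := by
  rw [Finset.sum_comm]
  refine Finset.sum_congr rfl fun i _ => ?_
  rw [Finset.sum_comm]
  refine Finset.sum_congr rfl fun j _ => Finset.sum_congr rfl fun k _ => ?_
  rw [show -(1*β⁻¹) * (ρ i * ((s i)⁻¹ * (e i j * -β * (p k j i * (2 * t k i)))))
      = (β⁻¹ * β) * (2 * (ρ i * (e i j * (s i)⁻¹) * p k j i * t k i)) from by ring,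
    inv_mul_cancel₀ hβ, one_mul]

set_option maxHeartbeats 1000000 in
/-- In the autonomy-aware clustering setup with squared Euclidean cost and
autonomy independent of `Y`, the free energy `F` is differentiable in `Y` and its gradient
has `ℓ`-th block `∂F/∂y_ℓ = 2 ∑ i ∑ j ρ(i) π_Y^β(j|i) p(ℓ|j,i) (y_ℓ − x_i)`. -/
theorem stmt_1 (N K d : ℕ) (β : ℝ) (hβ : 0 < β)
    (x : Fin N → EuclideanSpace ℝ (Fin d)) (ρ : Fin N → ℝ)
    (hρ : ∀ i, 0 ≤ ρ i) (hρ1 : ∑ i, ρ i = 1)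
    (p : Fin K → Fin K → Fin N → ℝ)
    (hp : ∀ k j i, 0 ≤ p k j i) (hp1 : ∀ j i, ∑ k, p k j i = 1)
    (davg : (PiLp 2 fun _ : Fin K => EuclideanSpace ℝ (Fin d)) → Fin N → Fin K → ℝ)
    (hdavg : ∀ Y i j, davg Y i j = ∑ k, p k j i * ‖x i - Y k‖ ^ 2)
    (πpol : (PiLp 2 fun _ : Fin K => EuclideanSpace ℝ (Fin d)) → Fin K → Fin N → ℝ)
    (hπ : ∀ Y j i, πpol Y j i =
      Real.exp (-β * davg Y i j) / ∑ ℓ, Real.exp (-β * davg Y i ℓ))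
    (F : (PiLp 2 fun _ : Fin K => EuclideanSpace ℝ (Fin d)) → ℝ)
    (hF : ∀ Y, F Y = -(1 / β) * ∑ i, ρ i * Real.log (∑ j, Real.exp (-β * davg Y i j)))
    (Y : PiLp 2 fun _ : Fin K => EuclideanSpace ℝ (Fin d))
    (G : PiLp 2 fun _ : Fin K => EuclideanSpace ℝ (Fin d))
    (hG : ∀ ℓ, G ℓ = (2 : ℝ) • ∑ i, ∑ j, (ρ i * πpol Y j i * p ℓ j i) • (Y ℓ - x i)) :
    HasGradientAt F G Y := by
  classical
  let H := PiLp 2 fun _ : Fin K => EuclideanSpace ℝ (Fin d)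
  rw [hasGradientAt_iff_hasFDerivAt]
  -- replace F by its concrete formula
  have hFeq : F = fun Z : H =>
      -(1 / β) * ∑ i, ρ i * Real.log (∑ j, Real.exp (-β * ∑ k, p k j i * ‖x i - Z k‖ ^ 2)) := by
    funext Z
    rw [hF]
    congr 1
    refine Finset.sum_congr rfl fun i _ => ?_
    congr 1
    congr 1
    refine Finset.sum_congr rfl fun j _ => ?_
    rw [hdavg]
  rw [hFeq]
  rcases Nat.eq_zero_or_pos K with hK | hK
  · -- K = 0 : the space is a subsingleton, everything is trivial
    subst hK
    have hGzero : (InnerProductSpace.toDual ℝ H) G = 0 := by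
      have : G = 0 := Subsingleton.elim G 0
      simp [this]
    rw [hGzero]
    have : (fun Z : H =>
        -(1 / β) * ∑ i, ρ i * Real.log (∑ j, Real.exp (-β * ∑ k, p k j i * ‖x i - Z k‖ ^ 2)))
        = fun _ : H => -(1 / β) * ∑ i, ρ i * Real.log 0 := by
      funext Z
      simp
    rw [this]
    exact hasFDerivAt_const _ _
  have hKne : Nonempty (Fin K) := ⟨⟨0, hK⟩⟩
  set S : Fin N → ℝ := fun i => ∑ j, Real.exp (-β * ∑ k, p k j i * ‖x i - Y k‖ ^ 2) with hSdef
  have hSpos : ∀ i, 0 < S i := fun i =>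
    Finset.sum_pos (fun j _ => Real.exp_pos _) Finset.univ_nonempty
  -- block derivatives
  set A : Fin N → Fin K → (H →L[ℝ] ℝ) := fun i k =>
    (innerSL ℝ ((2:ℝ) • (Y k - x i))).comp
      (PiLp.proj 2 (fun _ : Fin K => EuclideanSpace ℝ (Fin d)) k) with hA
  have h1 : ∀ (i : Fin N) (k : Fin K),
      HasFDerivAt (fun Z : H => ‖x i - Z k‖ ^ 2) (A i k) Y := by
    intro i k
    have := ((hasFDerivAt_const (x i) Y).sub
      ((PiLp.proj 2 (fun _ : Fin K => EuclideanSpace ℝ (Fin d)) k).hasFDerivAt)).norm_sq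
    refine HasFDerivAt.congr_fderiv this ?_
    ext w
    simp [hA, real_inner_smul_left, inner_sub_left, inner_sub_right]
    try ring
  set B : Fin N → Fin K → (H →L[ℝ] ℝ) := fun i j => ∑ k, p k j i • A i k with hB
  have h2 : ∀ (i : Fin N) (j : Fin K),
      HasFDerivAt (fun Z : H => ∑ k, p k j i * ‖x i - Z k‖ ^ 2) (B i j) Y := by
    intro i j
    exact HasFDerivAt.fun_sum fun k _ => (h1 i k).const_mul _
  set C : Fin N → Fin K → (H →L[ℝ] ℝ) := fun i j =>
    (Real.exp (-β * ∑ k, p k j i * ‖x i - Y k‖ ^ 2) * (-β)) • B i j with hC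
  have h3 : ∀ (i : Fin N) (j : Fin K),
      HasFDerivAt (fun Z : H => Real.exp (-β * ∑ k, p k j i * ‖x i - Z k‖ ^ 2)) (C i j) Y := by
    intro i j
    refine ((h2 i j).const_mul (-β)).exp.congr_fderiv ?_
    simp only [hC, smul_smul]
  have h4 : ∀ i : Fin N,
      HasFDerivAt (fun Z : H => ∑ j, Real.exp (-β * ∑ k, p k j i * ‖x i - Z k‖ ^ 2))
        (∑ j, C i j) Y := fun i => HasFDerivAt.fun_sum fun j _ => h3 i j
  have h5 : ∀ i : Fin N,
      HasFDerivAt (fun Z : H =>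
          Real.log (∑ j, Real.exp (-β * ∑ k, p k j i * ‖x i - Z k‖ ^ 2)))
        ((S i)⁻¹ • ∑ j, C i j) Y := fun i => (h4 i).log (hSpos i).ne'
  have h6 : HasFDerivAt (fun Z : H =>
      -(1 / β) * ∑ i, ρ i * Real.log (∑ j, Real.exp (-β * ∑ k, p k j i * ‖x i - Z k‖ ^ 2)))
      ((-(1/β)) • ∑ i, ρ i • ((S i)⁻¹ • ∑ j, C i j)) Y :=
    (HasFDerivAt.fun_sum fun i _ => (h5 i).const_mul (ρ i)).const_mul _
  -- identify the derivative with toDual G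
  refine h6.congr_fderiv (Eq.symm ?_)
  have hβ' : β ≠ 0 := hβ.ne'
  have hπY : ∀ j i, πpol Y j i =
      Real.exp (-β * ∑ k, p k j i * ‖x i - Y k‖ ^ 2) / S i := by
    intro j i
    rw [hπ, hSdef]
    simp only [hdavg]
  ext v
  simp only [InnerProductSpace.toDual_apply_apply]
  rw [PiLp.inner_apply]
  simp only [hG, real_inner_smul_left, sum_inner, smul_eq_mul,
    ContinuousLinearMap.smul_apply, ContinuousLinearMap.sum_apply, hC, hB, hA,
    ContinuousLinearMap.comp_apply, innerSL_apply_apply, PiLp.proj_apply, hπY, div_eq_mul_inv,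
    Finset.mul_sum, Finset.sum_mul]
  exact stmt_1_sum_aux hβ' ρ S
    (fun i j => Real.exp (∑ k : Fin K, -β * (p k j i * ‖x i - Y k‖ ^ 2))) p
    (fun k i => inner ℝ (Y k - x i) (v k))
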